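/- For every integer N ≥ 2, the polynomial ν_{N+1} does not belong to the ℂ-subalgebra of R generated by ν₂, ν₃, …, ν_N. In particular, the ℂ-subalgebra of R generated by all the ν_j (j ≥ 2) is not generated by any finite initial collection ν₂, …, ν_N. -/
import Mathlib

open MvPolynomial Finset

noncomputable section

def Zv (n : ℕ) (j : Fin n) : MvPolynomial (Fin n ⊕ Fin n) ℂ := X (Sum.inl j)

def Wv (n : ℕ) (j : Fin n) : MvPolynomial (Fin n ⊕ Fin n) ℂ := X (Sum.inr j)

/-- The `k`-th normalized harmonic moment. -/
def nu (n : ℕ) [NeZero n] (k : ℕ) : MvPolynomial (Fin n ⊕ Fin n) ℂ :=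
  C (Complex.I / 4) *
    ∑ j : Fin n, (Wv n j - Wv n (j + 1)) *
      ∑ m ∈ Finset.range k, Zv n j ^ (k - 1 - m) * Zv n (j + 1) ^ m

namespace Statement6Aux

/-- weight giving the `z`-degree -/
def wz (n : ℕ) : Fin n ⊕ Fin n → ℕ := Sum.elim (fun _ => 1) (fun _ => 0)

/-- weight giving the `w`-degree -/
def ww (n : ℕ) : Fin n ⊕ Fin n → ℕ := Sum.elim (fun _ => 0) (fun _ => 1)

lemma isWH_sub {σ : Type*} {w : σ → ℕ} {p q : MvPolynomial σ ℂ} {d : ℕ}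
    (hp : p.IsWeightedHomogeneous w d) (hq : q.IsWeightedHomogeneous w d) :
    (p - q).IsWeightedHomogeneous w d :=
  (weightedHomogeneousSubmodule ℂ w d).sub_mem hp hq

lemma isWH_pow {σ : Type*} {w : σ → ℕ} {p : MvPolynomial σ ℂ} {d : ℕ}
    (hp : p.IsWeightedHomogeneous w d) (k : ℕ) :
    (p ^ k).IsWeightedHomogeneous w (k * d) := by
  induction k with
  | zero => simpa using isWeightedHomogeneous_one ℂ w
  | succ k ih =>
      have := ih.mul hp
      rw [← pow_succ] at this
      convert this using 1
      ring

lemma nu_hom_w (n : ℕ) [NeZero n] (k : ℕ) :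
    (nu n k).IsWeightedHomogeneous (ww n) 1 := by
  have h : (∑ j : Fin n, (Wv n j - Wv n (j + 1)) *
      ∑ m ∈ Finset.range k, Zv n j ^ (k - 1 - m) * Zv n (j + 1) ^ m).IsWeightedHomogeneous
        (ww n) 1 := by
    apply IsWeightedHomogeneous.sum
    intro j _
    have hW : ((Wv n j - Wv n (j + 1))).IsWeightedHomogeneous (ww n) 1 := by
      apply isWH_sub
      · simpa [ww, Wv] using isWeightedHomogeneous_X (R := ℂ) (ww n) (Sum.inr j)
      · simpa [ww, Wv] using isWeightedHomogeneous_X (R := ℂ) (ww n) (Sum.inr (j + 1))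
    have hS : (∑ m ∈ Finset.range k, Zv n j ^ (k - 1 - m) * Zv n (j + 1) ^ m).IsWeightedHomogeneous
        (ww n) 0 := by
      apply IsWeightedHomogeneous.sum
      intro m _
      have h1 : (Zv n j ^ (k - 1 - m)).IsWeightedHomogeneous (ww n) ((k - 1 - m) * 0) :=
        isWH_pow (by simpa [ww, Zv] using isWeightedHomogeneous_X (R := ℂ) (ww n) (Sum.inl j)) _
      have h2 : (Zv n (j + 1) ^ m).IsWeightedHomogeneous (ww n) (m * 0) :=
        isWH_pow (by simpa [ww, Zv] using
          isWeightedHomogeneous_X (R := ℂ) (ww n) (Sum.inl (j + 1))) _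
      simpa using h1.mul h2
    simpa using hW.mul hS
  have := (isWeightedHomogeneous_C (ww n) (Complex.I / 4)).mul h
  simpa [nu] using this

lemma nu_hom_z (n : ℕ) [NeZero n] (k : ℕ) (hk : 1 ≤ k) :
    (nu n k).IsWeightedHomogeneous (wz n) (k - 1) := by
  have h : (∑ j : Fin n, (Wv n j - Wv n (j + 1)) *
      ∑ m ∈ Finset.range k, Zv n j ^ (k - 1 - m) * Zv n (j + 1) ^ m).IsWeightedHomogeneous
        (wz n) (k - 1) := by
    apply IsWeightedHomogeneous.sum
    intro j _
    have hW : ((Wv n j - Wv n (j + 1))).IsWeightedHomogeneous (wz n) 0 := by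
      apply isWH_sub
      · simpa [wz, Wv] using isWeightedHomogeneous_X (R := ℂ) (wz n) (Sum.inr j)
      · simpa [wz, Wv] using isWeightedHomogeneous_X (R := ℂ) (wz n) (Sum.inr (j + 1))
    have hS : (∑ m ∈ Finset.range k, Zv n j ^ (k - 1 - m) * Zv n (j + 1) ^ m).IsWeightedHomogeneous
        (wz n) (k - 1) := by
      apply IsWeightedHomogeneous.sum
      intro m hm
      rw [Finset.mem_range] at hm
      have h1 : (Zv n j ^ (k - 1 - m)).IsWeightedHomogeneous (wz n) ((k - 1 - m) * 1) :=
        isWH_pow (by simpa [wz, Zv] using isWeightedHomogeneous_X (R := ℂ) (wz n) (Sum.inl j)) _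
      have h2 : (Zv n (j + 1) ^ m).IsWeightedHomogeneous (wz n) (m * 1) :=
        isWH_pow (by simpa [wz, Zv] using
          isWeightedHomogeneous_X (R := ℂ) (wz n) (Sum.inl (j + 1))) _
      have := h1.mul h2
      have he : (k - 1 - m) * 1 + m * 1 = k - 1 := by omega
      rwa [he] at this
    simpa using hW.mul hS
  have := (isWeightedHomogeneous_C (wz n) (Complex.I / 4)).mul h
  simpa [nu] using this

/-- Evaluation point showing `nu n (N+1) ≠ 0`. -/
def pt (n : ℕ) [NeZero n] : Fin n ⊕ Fin n → ℂ :=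
  Sum.elim (fun j => if j = 0 then 1 else 0) (fun j => if j = 1 then 1 else 0)

lemma nu_ne_zero (n : ℕ) [NeZero n] (hn : 3 ≤ n) (N : ℕ) (hN : 2 ≤ N) :
    nu n (N + 1) ≠ 0 := by
  have h10 : (1 : Fin n) ≠ 0 := by
    simp [Fin.ext_iff, Fin.val_one', Nat.mod_eq_of_lt (by omega : 1 < n)]
  have h20 : (1 : Fin n) + 1 ≠ 0 := by
    simp [Fin.ext_iff, Fin.val_add, Fin.val_one', Nat.mod_eq_of_lt (by omega : 1 < n),
      Nat.mod_eq_of_lt (by omega : 2 < n)]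
  intro h0
  have := congrArg (eval (pt n)) h0
  rw [map_zero] at this
  rw [nu, map_mul, eval_C] at this
  have hsum : (eval (pt n)) (∑ j : Fin n, (Wv n j - Wv n (j + 1)) *
      ∑ m ∈ Finset.range (N + 1), Zv n j ^ (N + 1 - 1 - m) * Zv n (j + 1) ^ m) = -1 := by
    rw [map_sum]
    rw [Finset.sum_eq_single_of_mem (0 : Fin n) (Finset.mem_univ _)]
    · simp only [map_mul, map_sub, map_sum, map_pow, Wv, Zv, eval_X, pt, Sum.elim_inl,
        Sum.elim_inr]
      have hz : ((0 : Fin n) + 1) ≠ 0 := by rw [zero_add]; exact h10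
      rw [if_pos trivial, if_neg hz]
      have hcg : ∀ m ∈ Finset.range (N + 1),
          (1 : ℂ) ^ (N + 1 - 1 - m) * (0 : ℂ) ^ m = if m = 0 then 1 else 0 := by
        intro m hm
        rcases eq_or_ne m 0 with rfl | hm0
        · simp
        · simp [zero_pow hm0, hm0]
      rw [Finset.sum_congr rfl hcg, Finset.sum_ite_eq' (Finset.range (N + 1)) 0]
      simp
      omega
    · intro j _ hj
      simp only [map_mul, map_sub, map_sum, map_pow, Wv, Zv, eval_X, pt, Sum.elim_inl,
        Sum.elim_inr]
      rcases eq_or_ne j 1 with rfl | hj1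
      · rw [if_pos rfl]
        have hz1 : ((if (1 : Fin n) = 0 then (1:ℂ) else 0)) = 0 := if_neg h10
        have hz2 : ((if (1 : Fin n) + 1 = 0 then (1:ℂ) else 0)) = 0 := if_neg h20
        rw [hz1, hz2]
        have : ∀ m ∈ Finset.range (N + 1),
            ((0 : ℂ) ^ (N + 1 - 1 - m) * (0 : ℂ) ^ m) = 0 := by
          intro m hm
          rcases eq_or_ne m 0 with rfl | hm0
          · have hNe : N + 1 - 1 - 0 ≠ 0 := by omega
            rw [zero_pow hNe, zero_mul]
          · rw [zero_pow hm0, mul_zero]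
        rw [Finset.sum_congr rfl this]
        simp
      · have hj1' : j + 1 ≠ 1 := by
          intro h
          apply hj
          have : j + 1 = 0 + 1 := by simpa using h
          exact add_right_cancel this
        rw [if_neg hj1, if_neg hj1']
        simp
  rw [hsum] at this
  simp [Complex.I_ne_zero, div_eq_zero_iff] at this

end Statement6Aux

open Statement6Aux in
/-- For every `N ≥ 2`, the moment `ν_{N+1}` is not in the `ℂ`-subalgebra of `R`
generated by `ν₂, …, ν_N`; hence the algebra generated by all moments is not finitely
generated by any initial segment. -/
theorem statement6 (n : ℕ) [NeZero n] (hn : 3 ≤ n) (N : ℕ) (hN : 2 ≤ N) :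
    nu n (N + 1) ∉
      Algebra.adjoin ℂ {x : MvPolynomial (Fin n ⊕ Fin n) ℂ |
        ∃ k, 2 ≤ k ∧ k ≤ N ∧ x = nu n k} := by
  intro hmem
  have hz2 : (nu n (N + 1)).IsWeightedHomogeneous (wz n) N := by
    simpa using nu_hom_z n (N + 1) (by omega)
  have hw2 : (nu n (N + 1)).IsWeightedHomogeneous (ww n) 1 := nu_hom_w n (N + 1)
  have hne : nu n (N + 1) ≠ 0 := nu_ne_zero n hn N hN
  rw [← Subalgebra.mem_toSubmodule, Algebra.adjoin_eq_span] at hmem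
  have key : ∀ p ∈ Submodule.span ℂ ((Submonoid.closure
      {x : MvPolynomial (Fin n ⊕ Fin n) ℂ | ∃ k, 2 ≤ k ∧ k ≤ N ∧ x = nu n k} :
        Submonoid (MvPolynomial (Fin n ⊕ Fin n) ℂ)) : Set (MvPolynomial (Fin n ⊕ Fin n) ℂ)),
      weightedHomogeneousComponent (wz n) N (weightedHomogeneousComponent (ww n) 1 p) = 0 := by
    intro p hp
    induction hp using Submodule.span_induction with
    | mem x hx =>
        have hbi : ∃ r d : ℕ, x.IsWeightedHomogeneous (ww n) r ∧
            x.IsWeightedHomogeneous (wz n) d ∧ d + r ≤ r * N := by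
          induction hx using Submonoid.closure_induction with
          | mem y hy =>
              obtain ⟨k, hk2, hkN, rfl⟩ := hy
              exact ⟨1, k - 1, nu_hom_w n k, nu_hom_z n k (by omega), by omega⟩
          | one =>
              exact ⟨0, 0, isWeightedHomogeneous_one ℂ _, isWeightedHomogeneous_one ℂ _, by omega⟩
          | mul a b _ _ ha hb =>
              obtain ⟨r1, d1, hw1, hz1, hle1⟩ := ha
              obtain ⟨r2, d2, hw2', hz2', hle2⟩ := hb
              exact ⟨r1 + r2, d1 + d2, hw1.mul hw2', hz1.mul hz2', by nlinarith⟩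
        obtain ⟨r, d, hr, hd, hle⟩ := hbi
        rcases eq_or_ne r 1 with rfl | h1
        · rw [hr.weightedHomogeneousComponent_same]
          exact hd.weightedHomogeneousComponent_ne N (by omega)
        · rw [hr.weightedHomogeneousComponent_ne 1 (Ne.symm h1)]
          simp
    | zero => simp
    | add a b _ _ ha hb => rw [map_add, map_add, ha, hb, add_zero]
    | smul c a _ ha => rw [map_smul, map_smul, ha, smul_zero]
  have hK := key _ hmem
  rw [hw2.weightedHomogeneousComponent_same, hz2.weightedHomogeneousComponent_same] at hK
  exact hne hK
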